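/- Suppose relations HW=1 of arities 1, 2, and 3 can each be realized by a B-homogeneous simple graph with at most N vertices of maximum degree at most D (where a graph with k dangling edges realizes HW=1 of arity k if its solutions are exactly those selecting precisely one dangling edge). Then for every k ≥ 1, the relation HW=1 of arity k can be realized by a B-homogeneous simple graph with O(k·N) vertices of maximum degree at most D, via the following inductive construction: to go from arity k to arity k+1, take a node u realizing HW=1 of arity k, connect one of its dangling edges to a new node v realizing HW=1 of arity 2, and connect v's other dangling edge to a node w realizing HW=1 of arity 3; the k−1 remaining dangling edges of u together with the 2 remaining dangling edges of w form the k+1 dangling edges. Correctness: a subset D' of the k+1 dangling edges extends to a solution of the composed graph if and only if |D'| = 1. -/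

import Mathlib

set_option linter.unusedSectionVars false
set_option linter.unreachableTactic false
set_option linter.unusedTactic false
set_option maxHeartbeats 1000000

open Finset

/-- `RealizesHW1 B k N D` means: there is a `B`-homogeneous simple graph (given by its
finset of non-loop edges on at most `N` vertices, with maximum degree at most `D`
counting dangling edges) with `k` dangling edges attached at the portal vertices `port i`,
whose solutions select exactly one dangling edge, i.e. it realizes the relation HW=1
of arity `k`. -/
def RealizesHW1 (B : Finset ℕ) (k N D : ℕ) : Prop :=
  ∃ n ≤ N, ∃ (E : Finset (Sym2 (Fin n))) (port : Fin k → Fin n),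
    (∀ e ∈ E, ¬ e.IsDiag) ∧
    (∀ v : Fin n,
      (E.filter (fun e => v ∈ e)).card
        + (Finset.univ.filter (fun i => port i = v)).card ≤ D) ∧
    (∀ D' : Finset (Fin k),
      (∃ S ⊆ E, ∀ v : Fin n,
          (S.filter (fun e => v ∈ e)).card
            + (D'.filter (fun i => port i = v)).card ∈ B) ↔ D'.card = 1)


namespace HW1
variable {V W : Type*} [DecidableEq V] [DecidableEq W]

def dg (E : Finset (Sym2 V)) (v : V) : ℕ := (E.filter (fun e => v ∈ e)).card

def pc {k : ℕ} (port : Fin k → V) (D' : Finset (Fin k)) (v : V) : ℕ :=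
  (D'.filter (fun i => port i = v)).card

def smap (f : V ↪ W) : Sym2 V ↪ Sym2 W :=
  ⟨Sym2.map f, Sym2.map.injective f.injective⟩

lemma smap_apply (f : V ↪ W) (e : Sym2 V) : smap f e = Sym2.map f e := rfl

lemma dg_union {S T : Finset (Sym2 V)} (h : Disjoint S T) (v : V) :
    dg (S ∪ T) v = dg S v + dg T v := by
  unfold dg
  rw [filter_union, card_union_of_disjoint (disjoint_filter_filter h)]

lemma dg_empty (v : V) : dg (∅ : Finset (Sym2 V)) v = 0 := rfl

lemma dg_singleton (z : Sym2 V) (v : V) :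
    dg ({z} : Finset (Sym2 V)) v = if v ∈ z then 1 else 0 := by
  unfold dg
  rw [filter_singleton]
  split <;> simp

lemma mem_of_mem_smap {f : V ↪ W} {S : Finset (Sym2 V)} {z : Sym2 W}
    (hz : z ∈ S.map (smap f)) {x : W} (hx : x ∈ z) : ∃ a, f a = x := by
  rw [Finset.mem_map] at hz
  obtain ⟨e, _, rfl⟩ := hz
  rw [smap_apply, Sym2.mem_map] at hx
  obtain ⟨a, _, ha⟩ := hx
  exact ⟨a, ha⟩

lemma not_mem_smap {f : V ↪ W} {S : Finset (Sym2 V)} {z : Sym2 W}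
    (x : W) (hx : x ∈ z) (h : ∀ a, f a ≠ x) : z ∉ S.map (smap f) := by
  intro hz
  obtain ⟨a, ha⟩ := mem_of_mem_smap hz hx
  exact h a ha

lemma disj_smap {V' : Type*} [DecidableEq V'] {f : V ↪ W} {g : V' ↪ W}
    (h : ∀ a b, f a ≠ g b) (S : Finset (Sym2 V)) (T : Finset (Sym2 V')) :
    Disjoint (S.map (smap f)) (T.map (smap g)) := by
  rw [Finset.disjoint_left]
  intro z hz hz'
  obtain ⟨e, he, rfl⟩ := Finset.mem_map.mp hz
  induction e using Sym2.ind with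
  | _ x y =>
    have hx : f x ∈ smap f s(x, y) := by
      rw [smap_apply, Sym2.map_pair_eq]
      exact Sym2.mem_mk_left _ _
    obtain ⟨b, hb⟩ := mem_of_mem_smap hz' hx
    exact h x b hb.symm

lemma dg_smap (f : V ↪ W) (S : Finset (Sym2 V)) (a : V) :
    dg (S.map (smap f)) (f a) = dg S a := by
  unfold dg
  rw [Finset.filter_map, Finset.card_map]
  congr 1
  apply Finset.filter_congr
  intro e _
  simp only [Function.comp, smap_apply, Sym2.mem_map]
  constructor
  · rintro ⟨b, hb, hba⟩
    rwa [f.injective hba] at hb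
  · intro h
    exact ⟨a, h, rfl⟩

lemma dg_smap_zero {f : V ↪ W} (S : Finset (Sym2 V)) {w : W}
    (h : ∀ a, f a ≠ w) : dg (S.map (smap f)) w = 0 := by
  unfold dg
  rw [Finset.card_eq_zero, Finset.filter_eq_empty_iff]
  intro z hz hw
  obtain ⟨a, ha⟩ := mem_of_mem_smap hz hw
  exact h a ha

lemma pc_union {k : ℕ} {port : Fin k → V} {A B : Finset (Fin k)} (h : Disjoint A B) (v : V) :
    pc port (A ∪ B) v = pc port A v + pc port B v := by
  unfold pc
  rw [filter_union, card_union_of_disjoint (disjoint_filter_filter h)]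

lemma pc_empty {k : ℕ} (port : Fin k → V) (v : V) : pc port (∅ : Finset (Fin k)) v = 0 := rfl

lemma pc_singleton {k : ℕ} (port : Fin k → V) (x : Fin k) (v : V) :
    pc port ({x} : Finset (Fin k)) v = if port x = v then 1 else 0 := by
  unfold pc
  rw [filter_singleton]
  split <;> simp

lemma pc_eq_sum {k : ℕ} (port : Fin k → V) (D' : Finset (Fin k)) (v : V) :
    pc port D' v = ∑ i : Fin k, if i ∈ D' ∧ port i = v then 1 else 0 := by
  unfold pc
  rw [show D'.filter (fun i => port i = v) = univ.filter (fun i => i ∈ D' ∧ port i = v) by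
    ext i; simp, Finset.card_filter]

lemma pc_map {k l : ℕ} (port : Fin l → V) (g : Fin k ↪ Fin l) (A : Finset (Fin k)) (v : V) :
    pc port (A.map g) v = pc (port ∘ g) A v := by
  unfold pc
  rw [Finset.filter_map, Finset.card_map]
  rfl

lemma dg_equiv (e : V ≃ W) (S : Finset (Sym2 V)) (w : W) :
    dg (S.map (smap e.toEmbedding)) w = dg S (e.symm w) := by
  conv_lhs => rw [← e.apply_symm_apply w]
  exact dg_smap e.toEmbedding S (e.symm w)

lemma pc_equiv {k : ℕ} (e : V ≃ W) (port : Fin k → V) (D' : Finset (Fin k)) (w : W) :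
    pc (⇑e ∘ port) D' w = pc port D' (e.symm w) := by
  unfold pc
  congr 1
  apply Finset.filter_congr
  intro i _
  simp only [Function.comp]
  rw [Equiv.eq_symm_apply]


lemma transfer {k Dd : ℕ} (B : Finset ℕ) (e : V ≃ W)
    (E : Finset (Sym2 V)) (port : Fin k → V)
    (hnd : ∀ z ∈ E, ¬ z.IsDiag)
    (hdeg : ∀ v, dg E v + pc port univ v ≤ Dd)
    (hsol : ∀ D' : Finset (Fin k),
      (∃ S ⊆ E, ∀ v, dg S v + pc port D' v ∈ B) ↔ D'.card = 1) :
    (∀ z ∈ E.map (smap e.toEmbedding), ¬ z.IsDiag) ∧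
    (∀ w, dg (E.map (smap e.toEmbedding)) w + pc (⇑e ∘ port) univ w ≤ Dd) ∧
    (∀ D' : Finset (Fin k),
      (∃ S ⊆ E.map (smap e.toEmbedding), ∀ w, dg S w + pc (⇑e ∘ port) D' w ∈ B)
        ↔ D'.card = 1) := by
  refine ⟨?_, ?_, ?_⟩
  · intro z hz
    obtain ⟨x, hx, rfl⟩ := Finset.mem_map.mp hz
    rw [smap_apply, Sym2.isDiag_map (show Function.Injective ⇑e.toEmbedding from e.injective)]
    exact hnd x hx
  · intro w
    rw [dg_equiv, pc_equiv]
    exact hdeg _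
  · intro D'
    rw [← hsol D']
    constructor
    · rintro ⟨S', hS', hc⟩
      refine ⟨S'.map (smap e.symm.toEmbedding), ?_, ?_⟩
      · intro x hx
        obtain ⟨y, hy, rfl⟩ := Finset.mem_map.mp hx
        obtain ⟨z, hz, rfl⟩ := Finset.mem_map.mp (hS' hy)
        have : smap e.symm.toEmbedding (smap e.toEmbedding z) = z := by
          simp only [smap_apply, Sym2.map_map]
          have : (⇑e.symm ∘ ⇑e) = id := by
            funext a; simp
          rw [show (⇑e.symm.toEmbedding ∘ ⇑e.toEmbedding) = id from this, Sym2.map_id]; rfl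
        rwa [this]
      · intro v
        have h1 : dg (S'.map (smap e.symm.toEmbedding)) v = dg S' (e v) := by
          rw [dg_equiv]; simp
        have h2 : pc port D' v = pc (⇑e ∘ port) D' (e v) := by
          rw [pc_equiv]; simp
        rw [h1, h2]
        exact hc (e v)
    · rintro ⟨S, hS, hc⟩
      refine ⟨S.map (smap e.toEmbedding), Finset.map_subset_map.mpr hS, fun w => ?_⟩
      rw [dg_equiv, pc_equiv]
      exact hc _


section Step

variable {nu nv nw k : ℕ}

abbrev Wty (nu nv nw : ℕ) : Type := Fin nu ⊕ (Fin nv ⊕ Fin nw)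

def iuE : Fin nu ↪ Wty nu nv nw := ⟨Sum.inl, Sum.inl_injective⟩
def ivE : Fin nv ↪ Wty nu nv nw := ⟨fun b => Sum.inr (Sum.inl b), fun a b h => by simpa using h⟩
def iwE : Fin nw ↪ Wty nu nv nw := ⟨fun c => Sum.inr (Sum.inr c), fun a b h => by simpa using h⟩

variable (pu : Fin (k+1) → Fin nu) (pv : Fin 2 → Fin nv) (pw : Fin 3 → Fin nw)

def euvE : Sym2 (Wty nu nv nw) := s(iuE (pu (Fin.last k)), ivE (pv 0))

def evwE : Sym2 (Wty nu nv nw) := s(ivE (pv 1), iwE (pw 0))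

def tpart (b1 b2 : Bool) : Finset (Sym2 (Wty nu nv nw)) :=
  (if b1 then {euvE pu pv} else ∅) ∪ (if b2 then {evwE pv pw} else ∅)

def bigS (Su : Finset (Sym2 (Fin nu))) (Sv : Finset (Sym2 (Fin nv)))
    (Sw : Finset (Sym2 (Fin nw))) (b1 b2 : Bool) : Finset (Sym2 (Wty nu nv nw)) :=
  ((Su.map (smap iuE) ∪ Sv.map (smap ivE)) ∪ Sw.map (smap iwE)) ∪ tpart pu pv pw b1 b2

def port2 : Fin (k+2) → Wty nu nv nw := fun i =>
  Sum.elim (fun j : Fin k => iuE (pu j.castSucc)) (fun t : Fin 2 => iwE (pw t.succ))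
    (finSumFinEquiv.symm i)

def DuF (DD : Finset (Fin (k+2))) (b1 : Bool) : Finset (Fin (k+1)) :=
  (univ.filter (fun j : Fin k => Fin.castAdd 2 j ∈ DD)).map
      ⟨Fin.castSucc, Fin.castSucc_injective k⟩
    ∪ (if b1 then {Fin.last k} else ∅)

def DvF (b1 b2 : Bool) : Finset (Fin 2) :=
  (if b1 then {0} else ∅) ∪ (if b2 then {1} else ∅)

def DwF (DD : Finset (Fin (k+2))) (b2 : Bool) : Finset (Fin 3) :=
  (if b2 then {0} else ∅) ∪
    ((if Fin.natAdd k (0 : Fin 2) ∈ DD then {1} else ∅) ∪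
     (if Fin.natAdd k (1 : Fin 2) ∈ DD then ({2} : Finset (Fin 3)) else ∅))

lemma ivE_apply (b : Fin nv) : (ivE b : Wty nu nv nw) = Sum.inr (Sum.inl b) := rfl
lemma iwE_apply (c : Fin nw) : (iwE c : Wty nu nv nw) = Sum.inr (Sum.inr c) := rfl

-- euv ≠ evw
lemma euv_ne_evw : euvE pu pv (nu := nu) (nw := nw) ≠ evwE pv pw := by
  unfold euvE evwE
  intro h
  rw [Sym2.eq_iff] at h
  rcases h with ⟨h, -⟩ | ⟨h, -⟩ <;> simp [iuE, ivE, iwE] at h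

-- membership of vertices in euv/evw
lemma memU_euv (a : Fin nu) :
    (Sum.inl a : Wty nu nv nw) ∈ euvE pu pv ↔ pu (Fin.last k) = a := by
  unfold euvE
  rw [Sym2.mem_iff]
  simp [iuE, ivE, eq_comm]

lemma memU_evw (a : Fin nu) : (Sum.inl a : Wty nu nv nw) ∉ evwE pv pw := by
  unfold evwE
  rw [Sym2.mem_iff]
  simp [ivE, iwE]

lemma memV_euv (b : Fin nv) :
    (Sum.inr (Sum.inl b) : Wty nu nv nw) ∈ euvE pu pv ↔ pv 0 = b := by
  unfold euvE
  rw [Sym2.mem_iff]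
  simp [iuE, ivE_apply, eq_comm]

lemma memV_evw (b : Fin nv) :
    (Sum.inr (Sum.inl b) : Wty nu nv nw) ∈ evwE pv pw ↔ pv 1 = b := by
  unfold evwE
  rw [Sym2.mem_iff]
  simp [ivE_apply, iwE_apply, eq_comm]

lemma memW_euv (c : Fin nw) : (Sum.inr (Sum.inr c) : Wty nu nv nw) ∉ euvE pu pv := by
  unfold euvE
  rw [Sym2.mem_iff]
  simp [iuE, ivE_apply]

lemma memW_evw (c : Fin nw) :
    (Sum.inr (Sum.inr c) : Wty nu nv nw) ∈ evwE pv pw ↔ pw 0 = c := by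
  unfold evwE
  rw [Sym2.mem_iff]
  simp [ivE_apply, iwE_apply, eq_comm]

lemma dg_tpart (b1 b2 : Bool) (x : Wty nu nv nw) :
    dg (tpart pu pv pw b1 b2) x =
      (if b1 = true ∧ x ∈ euvE pu pv then 1 else 0)
        + (if b2 = true ∧ x ∈ evwE pv pw then 1 else 0) := by
  have hne := euv_ne_evw pu pv pw
  cases b1 <;> cases b2
  · simp [tpart, dg_empty]
  · simp [tpart, dg_singleton]
  · simp [tpart, dg_singleton]
  · rw [show tpart pu pv pw true true = {euvE pu pv} ∪ {evwE pv pw} by simp [tpart]]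
    rw [dg_union (by rw [Finset.disjoint_singleton]; exact hne), dg_singleton, dg_singleton]
    simp

lemma port2_castAdd (j : Fin k) :
    port2 (nv := nv) pu pw (Fin.castAdd 2 j) = iuE (pu j.castSucc) := by
  unfold port2
  rw [finSumFinEquiv_symm_apply_castAdd]
  rfl

lemma port2_natAdd (t : Fin 2) :
    port2 (nv := nv) pu pw (Fin.natAdd k t) = iwE (pw t.succ) := by
  unfold port2
  rw [finSumFinEquiv_symm_apply_natAdd]
  rfl

lemma pc_port2 (DD : Finset (Fin (k+2))) (x : Wty nu nv nw) :
    pc (port2 pu pw) DD x =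
      (∑ j : Fin k, if Fin.castAdd 2 j ∈ DD ∧ iuE (pu j.castSucc) = x then 1 else 0)
        + ((if Fin.natAdd k (0 : Fin 2) ∈ DD ∧ iwE (pw 1) = x then 1 else 0)
            + (if Fin.natAdd k (1 : Fin 2) ∈ DD ∧ iwE (pw 2) = x then 1 else 0)) := by
  rw [pc_eq_sum]
  rw [Fin.sum_univ_add (fun i => if i ∈ DD ∧ port2 pu pw i = x then 1 else 0)]
  congr 1
  · apply Finset.sum_congr rfl
    intro j _
    rw [port2_castAdd]
  · rw [Fin.sum_univ_two (fun t => if Fin.natAdd k t ∈ DD ∧ port2 pu pw (Fin.natAdd k t) = x then 1 else 0)]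
    rw [port2_natAdd, port2_natAdd]
    norm_num

lemma pc_DuF (DD : Finset (Fin (k+2))) (b1 : Bool) (a : Fin nu) :
    pc pu (DuF DD b1) a =
      (∑ j : Fin k, if Fin.castAdd 2 j ∈ DD ∧ pu j.castSucc = a then 1 else 0)
        + (if b1 = true ∧ pu (Fin.last k) = a then 1 else 0) := by
  unfold DuF
  rw [pc_union]
  · congr 1
    · rw [pc_map, pc_eq_sum]
      apply Finset.sum_congr rfl
      intro j _
      simp only [Finset.mem_filter, Finset.mem_univ, true_and]
      rfl
    · cases b1 <;> simp [pc_empty, pc_singleton]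
  · cases b1
    · simp
    · simp only [reduceIte]
      rw [Finset.disjoint_singleton_right, Finset.mem_map]
      rintro ⟨j, -, hj⟩
      exact (Fin.castSucc_lt_last j).ne hj

lemma pc_DvF (b1 b2 : Bool) (b : Fin nv) :
    pc pv (DvF b1 b2) b =
      (if b1 = true ∧ pv 0 = b then 1 else 0) + (if b2 = true ∧ pv 1 = b then 1 else 0) := by
  unfold DvF
  rw [pc_union]
  · cases b1 <;> cases b2 <;> simp [pc_empty, pc_singleton]
  · cases b1 <;> cases b2 <;> simp

lemma pc_DwF (DD : Finset (Fin (k+2))) (b2 : Bool) (c : Fin nw) :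
    pc pw (DwF DD b2) c =
      (if b2 = true ∧ pw 0 = c then 1 else 0)
        + ((if Fin.natAdd k (0 : Fin 2) ∈ DD ∧ pw 1 = c then 1 else 0)
            + (if Fin.natAdd k (1 : Fin 2) ∈ DD ∧ pw 2 = c then 1 else 0)) := by
  unfold DwF
  rw [pc_union, pc_union]
  · congr 1
    · cases b2 <;> simp [pc_empty, pc_singleton]
    · congr 1
      · by_cases h : Fin.natAdd k (0 : Fin 2) ∈ DD <;> simp [h, pc_empty, pc_singleton]
      · by_cases h : Fin.natAdd k (1 : Fin 2) ∈ DD <;> simp [h, pc_empty, pc_singleton]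
  · by_cases h : Fin.natAdd k (0 : Fin 2) ∈ DD <;>
      by_cases h' : Fin.natAdd k (1 : Fin 2) ∈ DD <;> simp [h, h']
  · cases b2 <;> by_cases h : Fin.natAdd k (0 : Fin 2) ∈ DD <;>
      by_cases h' : Fin.natAdd k (1 : Fin 2) ∈ DD <;> simp [h, h']

lemma tpart_sub (b1 b2 : Bool) {z : Sym2 (Wty nu nv nw)} (hz : z ∈ tpart pu pv pw b1 b2) :
    z = euvE pu pv ∨ z = evwE pv pw := by
  unfold tpart at hz
  rw [Finset.mem_union] at hz
  cases b1 <;> cases b2 <;> simp at hz <;> tauto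

lemma euv_not_mem_u (Su : Finset (Sym2 (Fin nu))) :
    euvE pu pv (nw := nw) ∉ Su.map (smap iuE) :=
  not_mem_smap (ivE (pv 0)) (by unfold euvE; exact Sym2.mem_mk_right _ _) (by simp [iuE, ivE])

lemma euv_not_mem_v (Sv : Finset (Sym2 (Fin nv))) :
    euvE pu pv (nw := nw) ∉ Sv.map (smap ivE) :=
  not_mem_smap (iuE (pu (Fin.last k))) (by unfold euvE; exact Sym2.mem_mk_left _ _)
    (by simp [iuE, ivE])

lemma euv_not_mem_w (Sw : Finset (Sym2 (Fin nw))) :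
    euvE pu pv (nw := nw) ∉ Sw.map (smap iwE) :=
  not_mem_smap (iuE (pu (Fin.last k))) (by unfold euvE; exact Sym2.mem_mk_left _ _)
    (by simp [iuE, iwE])

lemma evw_not_mem_u (Su : Finset (Sym2 (Fin nu))) :
    evwE pv pw (nu := nu) ∉ Su.map (smap iuE) :=
  not_mem_smap (ivE (pv 1)) (by unfold evwE; exact Sym2.mem_mk_left _ _) (by simp [iuE, ivE])

lemma evw_not_mem_v (Sv : Finset (Sym2 (Fin nv))) :
    evwE pv pw (nu := nu) ∉ Sv.map (smap ivE) :=
  not_mem_smap (iwE (pw 0)) (by unfold evwE; exact Sym2.mem_mk_right _ _) (by simp [ivE_apply, iwE_apply])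

lemma evw_not_mem_w (Sw : Finset (Sym2 (Fin nw))) :
    evwE pv pw (nu := nu) ∉ Sw.map (smap iwE) :=
  not_mem_smap (ivE (pv 1)) (by unfold evwE; exact Sym2.mem_mk_left _ _) (by simp [ivE_apply, iwE_apply])

lemma dg_bigS (Su : Finset (Sym2 (Fin nu))) (Sv : Finset (Sym2 (Fin nv)))
    (Sw : Finset (Sym2 (Fin nw))) (b1 b2 : Bool) (x : Wty nu nv nw) :
    dg (bigS pu pv pw Su Sv Sw b1 b2) x =
      dg (Su.map (smap (iuE (nv := nv) (nw := nw)))) x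
        + dg (Sv.map (smap (ivE (nu := nu) (nw := nw)))) x
        + dg (Sw.map (smap (iwE (nu := nu) (nv := nv)))) x
        + dg (tpart pu pv pw b1 b2) x := by
  unfold bigS
  have d1 : Disjoint (Su.map (smap (iuE (nv := nv) (nw := nw))))
      (Sv.map (smap (ivE (nu := nu) (nw := nw)))) :=
    disj_smap (by simp [iuE, ivE]) _ _
  have d2 : Disjoint (Su.map (smap (iuE (nv := nv) (nw := nw)))
        ∪ Sv.map (smap (ivE (nu := nu) (nw := nw))))
      (Sw.map (smap (iwE (nu := nu) (nv := nv)))) := by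
    rw [Finset.disjoint_union_left]
    exact ⟨disj_smap (by simp [iuE, iwE]) _ _, disj_smap (by simp [ivE_apply, iwE_apply]) _ _⟩
  have d3 : Disjoint ((Su.map (smap (iuE (nv := nv) (nw := nw)))
        ∪ Sv.map (smap (ivE (nu := nu) (nw := nw))))
        ∪ Sw.map (smap (iwE (nu := nu) (nv := nv))))
      (tpart pu pv pw b1 b2) := by
    rw [Finset.disjoint_right]
    intro z hz
    rcases tpart_sub pu pv pw b1 b2 hz with rfl | rfl <;>
      simp only [Finset.mem_union, not_or] <;>
      refine ⟨⟨?_, ?_⟩, ?_⟩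
    · exact euv_not_mem_u pu pv Su
    · exact euv_not_mem_v pu pv Sv
    · exact euv_not_mem_w pu pv Sw
    · exact evw_not_mem_u pv pw Su
    · exact evw_not_mem_v pv pw Sv
    · exact evw_not_mem_w pv pw Sw
  rw [dg_union d3, dg_union d2, dg_union d1]

lemma veU (Su : Finset (Sym2 (Fin nu))) (Sv : Finset (Sym2 (Fin nv)))
    (Sw : Finset (Sym2 (Fin nw))) (b1 b2 : Bool) (DD : Finset (Fin (k+2))) (a : Fin nu) :
    dg (bigS pu pv pw Su Sv Sw b1 b2) (Sum.inl a) + pc (port2 (nv := nv) pu pw) DD (Sum.inl a)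
      = dg Su a + pc pu (DuF DD b1) a := by
  rw [dg_bigS, pc_port2, pc_DuF]
  have h1 : dg (Su.map (smap iuE)) (Sum.inl a : Wty nu nv nw) = dg Su a := dg_smap iuE Su a
  have h2 : dg (Sv.map (smap ivE)) (Sum.inl a : Wty nu nv nw) = 0 :=
    dg_smap_zero _ (by simp [ivE])
  have h3 : dg (Sw.map (smap iwE)) (Sum.inl a : Wty nu nv nw) = 0 :=
    dg_smap_zero _ (by simp [iwE])
  rw [h1, h2, h3, dg_tpart]
  simp only [memU_euv, memU_evw, and_false, if_false, add_zero, zero_add, iuE, iwE,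
    Function.Embedding.coeFn_mk, reduceCtorEq, Sum.inl.injEq]
  ring

lemma veV (Su : Finset (Sym2 (Fin nu))) (Sv : Finset (Sym2 (Fin nv)))
    (Sw : Finset (Sym2 (Fin nw))) (b1 b2 : Bool) (DD : Finset (Fin (k+2))) (b : Fin nv) :
    dg (bigS pu pv pw Su Sv Sw b1 b2) (Sum.inr (Sum.inl b))
        + pc (port2 (nv := nv) pu pw) DD (Sum.inr (Sum.inl b))
      = dg Sv b + pc pv (DvF b1 b2) b := by
  rw [dg_bigS, pc_port2, pc_DvF]
  have h1 : dg (Su.map (smap iuE)) (Sum.inr (Sum.inl b) : Wty nu nv nw) = 0 :=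
    dg_smap_zero _ (by simp [iuE])
  have h2 : dg (Sv.map (smap ivE)) (Sum.inr (Sum.inl b) : Wty nu nv nw) = dg Sv b :=
    dg_smap ivE Sv b
  have h3 : dg (Sw.map (smap iwE)) (Sum.inr (Sum.inl b) : Wty nu nv nw) = 0 :=
    dg_smap_zero _ (by simp [iwE_apply])
  rw [h1, h2, h3, dg_tpart]
  simp only [memV_euv, memV_evw, iuE, iwE_apply, Function.Embedding.coeFn_mk, reduceCtorEq,
    Sum.inr.injEq, and_false, if_false, add_zero, zero_add, Finset.sum_const_zero]

lemma veW (Su : Finset (Sym2 (Fin nu))) (Sv : Finset (Sym2 (Fin nv)))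
    (Sw : Finset (Sym2 (Fin nw))) (b1 b2 : Bool) (DD : Finset (Fin (k+2))) (c : Fin nw) :
    dg (bigS pu pv pw Su Sv Sw b1 b2) (Sum.inr (Sum.inr c))
        + pc (port2 (nv := nv) pu pw) DD (Sum.inr (Sum.inr c))
      = dg Sw c + pc pw (DwF DD b2) c := by
  rw [dg_bigS, pc_port2, pc_DwF]
  have h1 : dg (Su.map (smap iuE)) (Sum.inr (Sum.inr c) : Wty nu nv nw) = 0 :=
    dg_smap_zero _ (by simp [iuE])
  have h2 : dg (Sv.map (smap ivE)) (Sum.inr (Sum.inr c) : Wty nu nv nw) = 0 :=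
    dg_smap_zero _ (by simp [ivE_apply])
  have h3 : dg (Sw.map (smap iwE)) (Sum.inr (Sum.inr c) : Wty nu nv nw) = dg Sw c :=
    dg_smap iwE Sw c
  rw [h1, h2, h3, dg_tpart]
  simp only [memW_euv, memW_evw, iuE, iwE_apply, Function.Embedding.coeFn_mk, reduceCtorEq,
    and_false, if_false, add_zero, zero_add, Finset.sum_const_zero, Sum.inr.injEq]
  ring

lemma card_DuF (DD : Finset (Fin (k+2))) (b1 : Bool) :
    (DuF DD b1).card =
      (univ.filter (fun j : Fin k => Fin.castAdd 2 j ∈ DD)).card + (if b1 = true then 1 else 0) := by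
  unfold DuF
  rw [card_union_of_disjoint, card_map]
  · cases b1 <;> simp
  · cases b1
    · simp
    · simp only [reduceIte]
      rw [Finset.disjoint_singleton_right, Finset.mem_map]
      rintro ⟨j, -, hj⟩
      exact (Fin.castSucc_lt_last j).ne hj

lemma card_DvF (b1 b2 : Bool) :
    (DvF b1 b2).card = (if b1 = true then 1 else 0) + (if b2 = true then 1 else 0) := by
  cases b1 <;> cases b2 <;> decide

lemma card_DwF (DD : Finset (Fin (k+2))) (b2 : Bool) :
    (DwF DD b2).card =
      (if b2 = true then 1 else 0)
        + ((if Fin.natAdd k (0 : Fin 2) ∈ DD then 1 else 0)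
            + (if Fin.natAdd k (1 : Fin 2) ∈ DD then 1 else 0)) := by
  unfold DwF
  cases b2 <;> by_cases h0 : Fin.natAdd k (0 : Fin 2) ∈ DD <;>
    by_cases h1 : Fin.natAdd k (1 : Fin 2) ∈ DD <;>
    simp [h0, h1] <;> decide

lemma card_DD (DD : Finset (Fin (k+2))) :
    DD.card =
      (univ.filter (fun j : Fin k => Fin.castAdd 2 j ∈ DD)).card
        + ((if Fin.natAdd k (0 : Fin 2) ∈ DD then 1 else 0)
            + (if Fin.natAdd k (1 : Fin 2) ∈ DD then 1 else 0)) := by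
  conv_lhs => rw [← Finset.filter_univ_mem DD]
  rw [Finset.card_filter]
  rw [Fin.sum_univ_add (fun i : Fin (k+2) => if i ∈ DD then 1 else 0)]
  congr 1
  · rw [Finset.card_filter]

lemma DuF_univ_true : DuF (univ : Finset (Fin (k+2))) true = univ := by
  ext j
  simp only [DuF, Finset.mem_union, Finset.mem_map, Finset.mem_filter, Finset.mem_univ,
    true_and, reduceIte, Finset.mem_singleton, Function.Embedding.coeFn_mk, iff_true]
  rcases Fin.eq_castSucc_or_eq_last j with ⟨i, rfl⟩ | rfl
  · exact Or.inl ⟨i, rfl⟩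
  · exact Or.inr rfl

lemma DvF_univ_true : DvF true true = univ := by decide

lemma DwF_univ_true : DwF (univ : Finset (Fin (k+2))) true = univ := by
  simp only [DwF, Finset.mem_univ, reduceIte]
  decide

lemma bigS_subset {Su Eu : Finset (Sym2 (Fin nu))} {Sv Ev : Finset (Sym2 (Fin nv))}
    {Sw Ew : Finset (Sym2 (Fin nw))} (hSu : Su ⊆ Eu) (hSv : Sv ⊆ Ev) (hSw : Sw ⊆ Ew)
    (b1 b2 : Bool) :
    bigS pu pv pw Su Sv Sw b1 b2 ⊆ bigS pu pv pw Eu Ev Ew true true := by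
  unfold bigS tpart
  refine Finset.union_subset_union (Finset.union_subset_union
    (Finset.union_subset_union (Finset.map_subset_map.mpr hSu) (Finset.map_subset_map.mpr hSv))
    (Finset.map_subset_map.mpr hSw)) (Finset.union_subset_union ?_ ?_) <;>
    [cases b1; cases b2] <;> simp

lemma decomp (Eu : Finset (Sym2 (Fin nu))) (Ev : Finset (Sym2 (Fin nv)))
    (Ew : Finset (Sym2 (Fin nw))) {S : Finset (Sym2 (Wty nu nv nw))}
    (hS : S ⊆ bigS pu pv pw Eu Ev Ew true true) :
    S = bigS pu pv pw (Eu.filter (fun e => smap iuE e ∈ S))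
          (Ev.filter (fun e => smap ivE e ∈ S)) (Ew.filter (fun e => smap iwE e ∈ S))
          (decide (euvE pu pv ∈ S)) (decide (evwE pv pw ∈ S)) := by
  ext z
  constructor
  · intro hz
    have hz' := hS hz
    unfold bigS tpart at hz' ⊢
    simp only [reduceIte, Finset.mem_union] at hz'
    rcases hz' with ((h | h) | h) | (h | h)
    · obtain ⟨e, he, rfl⟩ := Finset.mem_map.mp h
      exact Finset.mem_union_left _ (Finset.mem_union_left _ (Finset.mem_union_left _
        (Finset.mem_map_of_mem _ (Finset.mem_filter.mpr ⟨he, hz⟩))))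
    · obtain ⟨e, he, rfl⟩ := Finset.mem_map.mp h
      exact Finset.mem_union_left _ (Finset.mem_union_left _ (Finset.mem_union_right _
        (Finset.mem_map_of_mem _ (Finset.mem_filter.mpr ⟨he, hz⟩))))
    · obtain ⟨e, he, rfl⟩ := Finset.mem_map.mp h
      exact Finset.mem_union_left _ (Finset.mem_union_right _
        (Finset.mem_map_of_mem _ (Finset.mem_filter.mpr ⟨he, hz⟩)))
    · rw [Finset.mem_singleton] at h
      subst h
      apply Finset.mem_union_right
      apply Finset.mem_union_left
      rw [decide_eq_true hz]
      simp
    · rw [Finset.mem_singleton] at h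
      subst h
      apply Finset.mem_union_right
      apply Finset.mem_union_right
      rw [decide_eq_true hz]
      simp
  · intro hz
    unfold bigS tpart at hz
    rcases Finset.mem_union.mp hz with h | h
    · rcases Finset.mem_union.mp h with h' | h'
      · rcases Finset.mem_union.mp h' with h'' | h''
        · obtain ⟨e, he, rfl⟩ := Finset.mem_map.mp h''
          exact (Finset.mem_filter.mp he).2
        · obtain ⟨e, he, rfl⟩ := Finset.mem_map.mp h''
          exact (Finset.mem_filter.mp he).2
      · obtain ⟨e, he, rfl⟩ := Finset.mem_map.mp h'
        exact (Finset.mem_filter.mp he).2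
    · rcases Finset.mem_union.mp h with h' | h'
      · by_cases heuv : euvE pu pv (nw := nw) ∈ S
        · rw [decide_eq_true heuv] at h'
          simp only [reduceIte, Finset.mem_singleton] at h'
          subst h'
          exact heuv
        · rw [decide_eq_false heuv] at h'
          simp at h'
      · by_cases hevw : evwE pv pw (nu := nu) ∈ S
        · rw [decide_eq_true hevw] at h'
          simp only [reduceIte, Finset.mem_singleton] at h'
          subst h'
          exact hevw
        · rw [decide_eq_false hevw] at h'
          simp at h'

end Step

lemma realizes_iff {B : Finset ℕ} {k N Dd : ℕ} :
    RealizesHW1 B k N Dd ↔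
      ∃ n ≤ N, ∃ (E : Finset (Sym2 (Fin n))) (port : Fin k → Fin n),
        (∀ e ∈ E, ¬ e.IsDiag) ∧
        (∀ v, dg E v + pc port univ v ≤ Dd) ∧
        (∀ D' : Finset (Fin k),
          (∃ S ⊆ E, ∀ v, dg S v + pc port D' v ∈ B) ↔ D'.card = 1) := Iff.rfl

lemma step {B : Finset ℕ} {Dd k Mu Nn : ℕ}
    (hu : RealizesHW1 B (k+1) Mu Dd) (hv : RealizesHW1 B 2 Nn Dd)
    (hw : RealizesHW1 B 3 Nn Dd) :
    RealizesHW1 B (k+2) (Mu + (Nn + Nn)) Dd := by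
  rw [realizes_iff] at hu hv hw ⊢
  obtain ⟨nu, hnu, Eu, pu, hund, hudeg, husol⟩ := hu
  obtain ⟨nv, hnv, Ev, pv, hvnd, hvdeg, hvsol⟩ := hv
  obtain ⟨nw, hnw, Ew, pw, hwnd, hwdeg, hwsol⟩ := hw
  -- build the composed graph on the sum type
  have hnd : ∀ z ∈ bigS pu pv pw Eu Ev Ew true true, ¬ z.IsDiag := by
    intro z hz
    unfold bigS at hz
    rcases Finset.mem_union.mp hz with h | h
    · rcases Finset.mem_union.mp h with h' | h'
      · rcases Finset.mem_union.mp h' with h'' | h''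
        · obtain ⟨e, he, rfl⟩ := Finset.mem_map.mp h''
          rw [smap_apply, Sym2.isDiag_map (iuE (nv := nv) (nw := nw)).injective]
          exact hund e he
        · obtain ⟨e, he, rfl⟩ := Finset.mem_map.mp h''
          rw [smap_apply, Sym2.isDiag_map (ivE (nu := nu) (nw := nw)).injective]
          exact hvnd e he
      · obtain ⟨e, he, rfl⟩ := Finset.mem_map.mp h'
        rw [smap_apply, Sym2.isDiag_map (iwE (nu := nu) (nv := nv)).injective]
        exact hwnd e he
    · rcases tpart_sub pu pv pw true true h with rfl | rfl
      · unfold euvE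
        rw [Sym2.mk_isDiag_iff]
        simp [iuE, ivE]
      · unfold evwE
        rw [Sym2.mk_isDiag_iff]
        simp [ivE_apply, iwE_apply]
  have hdeg : ∀ x, dg (bigS pu pv pw Eu Ev Ew true true) x
      + pc (port2 (nv := nv) pu pw) univ x ≤ Dd := by
    rintro (a | b | c)
    · rw [veU pu pv pw Eu Ev Ew true true univ a, DuF_univ_true]
      exact hudeg a
    · rw [veV pu pv pw Eu Ev Ew true true univ b, DvF_univ_true]
      exact hvdeg b
    · rw [veW pu pv pw Eu Ev Ew true true univ c, DwF_univ_true]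
      exact hwdeg c
  have hsol : ∀ DD : Finset (Fin (k+2)),
      (∃ S ⊆ bigS pu pv pw Eu Ev Ew true true,
        ∀ x, dg S x + pc (port2 (nv := nv) pu pw) DD x ∈ B) ↔ DD.card = 1 := by
    intro DD
    constructor
    · rintro ⟨S, hS, hc⟩
      have hdec := decomp pu pv pw Eu Ev Ew hS
      have hDu : (DuF DD (decide (euvE pu pv (nw := nw) ∈ S))).card = 1 := by
        apply (husol _).mp
        refine ⟨Eu.filter (fun e => smap iuE e ∈ S), Finset.filter_subset _ _, fun a => ?_⟩
        rw [← veU pu pv pw (Eu.filter (fun e => smap iuE e ∈ S))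
          (Ev.filter (fun e => smap ivE e ∈ S)) (Ew.filter (fun e => smap iwE e ∈ S))
          (decide (euvE pu pv ∈ S)) (decide (evwE pv pw ∈ S)) DD a, ← hdec]
        exact hc (Sum.inl a)
      have hDv : (DvF (decide (euvE pu pv (nw := nw) ∈ S))
          (decide (evwE pv pw (nu := nu) ∈ S))).card = 1 := by
        apply (hvsol _).mp
        refine ⟨Ev.filter (fun e => smap ivE e ∈ S), Finset.filter_subset _ _, fun b => ?_⟩
        rw [← veV pu pv pw (Eu.filter (fun e => smap iuE e ∈ S))
          (Ev.filter (fun e => smap ivE e ∈ S)) (Ew.filter (fun e => smap iwE e ∈ S))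
          (decide (euvE pu pv ∈ S)) (decide (evwE pv pw ∈ S)) DD b, ← hdec]
        exact hc (Sum.inr (Sum.inl b))
      have hDw : (DwF DD (decide (evwE pv pw (nu := nu) ∈ S))).card = 1 := by
        apply (hwsol _).mp
        refine ⟨Ew.filter (fun e => smap iwE e ∈ S), Finset.filter_subset _ _, fun c => ?_⟩
        rw [← veW pu pv pw (Eu.filter (fun e => smap iuE e ∈ S))
          (Ev.filter (fun e => smap ivE e ∈ S)) (Ew.filter (fun e => smap iwE e ∈ S))
          (decide (euvE pu pv ∈ S)) (decide (evwE pv pw ∈ S)) DD c, ← hdec]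
        exact hc (Sum.inr (Sum.inr c))
      rw [card_DuF] at hDu
      rw [card_DvF] at hDv
      rw [card_DwF] at hDw
      rw [card_DD]
      have harr : ∀ x y : Bool, ∀ c t0 t1 : ℕ,
          c + (if x = true then 1 else 0) = 1 →
          (if x = true then 1 else 0) + (if y = true then 1 else 0) = 1 →
          (if y = true then 1 else 0) + (t0 + t1) = 1 →
          c + (t0 + t1) = 1 := by
        intro x y c t0 t1
        cases x <;> cases y <;> simp <;> omega
      exact harr _ _ _ _ _ hDu hDv hDw
    · intro hcard
      have build : ∀ b1 b2 : Bool, (DuF DD b1).card = 1 → (DvF b1 b2).card = 1 →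
          (DwF DD b2).card = 1 →
          ∃ S ⊆ bigS pu pv pw Eu Ev Ew true true,
            ∀ x, dg S x + pc (port2 (nv := nv) pu pw) DD x ∈ B := by
        intro b1 b2 hDu hDv hDw
        obtain ⟨Su, hSu, hcu⟩ := (husol _).mpr hDu
        obtain ⟨Sv, hSv, hcv⟩ := (hvsol _).mpr hDv
        obtain ⟨Sw, hSw, hcw⟩ := (hwsol _).mpr hDw
        refine ⟨bigS pu pv pw Su Sv Sw b1 b2, bigS_subset pu pv pw hSu hSv hSw b1 b2, ?_⟩
        rintro (a | b | c)
        · rw [veU pu pv pw Su Sv Sw b1 b2 DD a]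
          exact hcu a
        · rw [veV pu pv pw Su Sv Sw b1 b2 DD b]
          exact hcv b
        · rw [veW pu pv pw Su Sv Sw b1 b2 DD c]
          exact hcw c
      rw [card_DD] at hcard
      by_cases ht0 : Fin.natAdd k (0 : Fin 2) ∈ DD <;>
        by_cases ht1 : Fin.natAdd k (1 : Fin 2) ∈ DD
      · exfalso
        simp [ht0, ht1] at hcard
      · apply build true false
        · rw [card_DuF]
          simp [ht0, ht1] at hcard ⊢
          exact hcard
        · rw [card_DvF]
          decide
        · rw [card_DwF]
          simp [ht0, ht1]
      · apply build true false
        · rw [card_DuF]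
          simp [ht0, ht1] at hcard ⊢
          exact hcard
        · rw [card_DvF]
          decide
        · rw [card_DwF]
          simp [ht0, ht1]
      · apply build false true
        · rw [card_DuF]
          simp [ht0, ht1] at hcard ⊢
          exact hcard
        · rw [card_DvF]
          decide
        · rw [card_DwF]
          simp [ht0, ht1]
  obtain ⟨h1', h2', h3'⟩ := transfer B
    ((Equiv.sumCongr (Equiv.refl (Fin nu)) finSumFinEquiv).trans finSumFinEquiv)
    (bigS pu pv pw Eu Ev Ew true true) (port2 (nv := nv) pu pw) hnd hdeg hsol
  exact ⟨nu + (nv + nw), by omega, _, _, h1', h2', h3'⟩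

lemma mono {B : Finset ℕ} {k N N' Dd : ℕ} (h : N ≤ N') :
    RealizesHW1 B k N Dd → RealizesHW1 B k N' Dd := by
  rintro ⟨n, hn, rest⟩
  exact ⟨n, hn.trans h, rest⟩

lemma main {B : Finset ℕ} {N Dd : ℕ} (h1 : RealizesHW1 B 1 N Dd)
    (h2 : RealizesHW1 B 2 N Dd) (h3 : RealizesHW1 B 3 N Dd) :
    ∀ k, RealizesHW1 B (k+1) ((2*k+1)*N) Dd := by
  intro k
  induction k with
  | zero => exact mono (by omega) h1
  | succ m ih => exact mono (le_of_eq (by ring)) (step ih h2 h3)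

end HW1

theorem stmt_16 (B : Finset ℕ) (N D : ℕ)
    (h1 : RealizesHW1 B 1 N D) (h2 : RealizesHW1 B 2 N D) (h3 : RealizesHW1 B 3 N D) :
    ∃ C : ℕ, ∀ k : ℕ, 1 ≤ k → RealizesHW1 B k (C * k * N) D := by
  refine ⟨2, fun k hk => ?_⟩
  obtain ⟨m, rfl⟩ : ∃ m, k = m + 1 := ⟨k - 1, by omega⟩
  exact HW1.mono (Nat.mul_le_mul_right N (show 2*m+1 ≤ 2*(m+1) by omega)) (HW1.main h1 h2 h3 m)
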